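/- Let (a_k)_{k∈ℕ} be a sequence of positive real numbers and let C₀ > 0. Assume that a_k ≤ C₀ Σ_{k₁,k₂ ∈ ℕ, k₁+k₂=k} a_{k₁} a_{k₂} holds for every integer k ≥ 2. Then for every k ∈ ℕ one has a_k ≤ ((2/3) π² C₀)^{k−1} a₁^{k}. -/

import Mathlib

open Finset

lemma basel_partial (s : Finset ℕ) : ∑ j ∈ s, (1 : ℝ) / (j : ℝ) ^ 2 ≤ Real.pi ^ 2 / 6 :=
  sum_le_hasSum s (fun i _ => by positivity) hasSum_zeta_two

lemma antidiag_sum_fst (k : ℕ) (f : ℕ → ℝ) :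
    ∑ p ∈ (Finset.HasAntidiagonal.antidiagonal k).filter (fun p => 1 ≤ p.1 ∧ 1 ≤ p.2), f p.1
      = ∑ j ∈ Finset.Ioo 0 k, f j := by
  apply Finset.sum_nbij' (fun p => p.1) (fun j => (j, k - j))
  · intro p hp
    simp only [mem_filter, Finset.HasAntidiagonal.mem_antidiagonal] at hp
    simp only [Finset.mem_Ioo]
    omega
  · intro j hj
    simp only [Finset.mem_Ioo] at hj
    simp only [mem_filter, Finset.HasAntidiagonal.mem_antidiagonal]
    omega
  · intro p hp
    simp only [mem_filter, Finset.HasAntidiagonal.mem_antidiagonal] at hp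
    ext <;> simp <;> omega
  · intro j hj
    simp
  · intro p hp
    rfl

lemma antidiag_sum_snd (k : ℕ) (f : ℕ → ℝ) :
    ∑ p ∈ (Finset.HasAntidiagonal.antidiagonal k).filter (fun p => 1 ≤ p.1 ∧ 1 ≤ p.2), f p.2
      = ∑ j ∈ Finset.Ioo 0 k, f j := by
  apply Finset.sum_nbij' (fun p => p.2) (fun j => (k - j, j))
  · intro p hp
    simp only [mem_filter, Finset.HasAntidiagonal.mem_antidiagonal] at hp
    simp only [Finset.mem_Ioo]
    omega
  · intro j hj
    simp only [Finset.mem_Ioo] at hj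
    simp only [mem_filter, Finset.HasAntidiagonal.mem_antidiagonal]
    omega
  · intro p hp
    simp only [mem_filter, Finset.HasAntidiagonal.mem_antidiagonal] at hp
    ext <;> simp <;> omega
  · intro j hj
    simp
  · intro p hp
    rfl

/-- key combinatorial estimate -/
lemma sum_inv_sq_antidiag (k : ℕ) (hk : 2 ≤ k) :
    ∑ p ∈ (Finset.HasAntidiagonal.antidiagonal k).filter (fun p => 1 ≤ p.1 ∧ 1 ≤ p.2),
      (1 : ℝ) / ((p.1 : ℝ) ^ 2 * (p.2 : ℝ) ^ 2) ≤ 2 / 3 * Real.pi ^ 2 / (k : ℝ) ^ 2 := by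
  have hk0 : (0 : ℝ) < (k : ℝ) ^ 2 := by positivity
  rw [le_div_iff₀ hk0, Finset.sum_mul]
  have step1 : ∑ p ∈ (Finset.HasAntidiagonal.antidiagonal k).filter (fun p => 1 ≤ p.1 ∧ 1 ≤ p.2),
      (1 : ℝ) / ((p.1 : ℝ) ^ 2 * (p.2 : ℝ) ^ 2) * (k : ℝ) ^ 2
      ≤ ∑ p ∈ (Finset.HasAntidiagonal.antidiagonal k).filter (fun p => 1 ≤ p.1 ∧ 1 ≤ p.2),
        (2 / (p.1 : ℝ) ^ 2 + 2 / (p.2 : ℝ) ^ 2) := by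
    apply Finset.sum_le_sum
    intro p hp
    simp only [mem_filter, Finset.HasAntidiagonal.mem_antidiagonal] at hp
    have h1 : (0 : ℝ) < (p.1 : ℝ) := by exact_mod_cast hp.2.1
    have h2 : (0 : ℝ) < (p.2 : ℝ) := by exact_mod_cast hp.2.2
    have hksq : ((k : ℝ)) ^ 2 ≤ 2 * (p.1 : ℝ) ^ 2 + 2 * (p.2 : ℝ) ^ 2 := by
      have : (k : ℝ) = (p.1 : ℝ) + (p.2 : ℝ) := by exact_mod_cast hp.1.symm
      rw [this]
      nlinarith [sq_nonneg ((p.1 : ℝ) - (p.2 : ℝ))]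
    rw [div_mul_eq_mul_div, one_mul, div_add_div _ _ (by positivity) (by positivity),
      div_le_div_iff₀ (by positivity) (by positivity)]
    nlinarith [sq_nonneg ((p.1 : ℝ) * (p.2 : ℝ)), mul_pos (mul_pos h1 h1) (mul_pos h2 h2)]
  refine step1.trans ?_
  rw [Finset.sum_add_distrib]
  have e1 : ∑ p ∈ (Finset.HasAntidiagonal.antidiagonal k).filter (fun p => 1 ≤ p.1 ∧ 1 ≤ p.2),
      (2 : ℝ) / (p.1 : ℝ) ^ 2 = ∑ j ∈ Finset.Ioo 0 k, (2 : ℝ) / (j : ℝ) ^ 2 :=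
    antidiag_sum_fst k (fun j => (2 : ℝ) / (j : ℝ) ^ 2)
  have e2 : ∑ p ∈ (Finset.HasAntidiagonal.antidiagonal k).filter (fun p => 1 ≤ p.1 ∧ 1 ≤ p.2),
      (2 : ℝ) / (p.2 : ℝ) ^ 2 = ∑ j ∈ Finset.Ioo 0 k, (2 : ℝ) / (j : ℝ) ^ 2 :=
    antidiag_sum_snd k (fun j => (2 : ℝ) / (j : ℝ) ^ 2)
  rw [e1, e2]
  have hb : ∑ j ∈ Finset.Ioo 0 k, (2 : ℝ) / (j : ℝ) ^ 2 ≤ 2 * (Real.pi ^ 2 / 6) := by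
    have := basel_partial (Finset.Ioo 0 k)
    calc ∑ j ∈ Finset.Ioo 0 k, (2 : ℝ) / (j : ℝ) ^ 2
        = 2 * ∑ j ∈ Finset.Ioo 0 k, (1 : ℝ) / (j : ℝ) ^ 2 := by
          rw [Finset.mul_sum]; congr 1; ext j; ring
      _ ≤ 2 * (Real.pi ^ 2 / 6) := by linarith
  nlinarith [Real.pi_pos]

/-- If a sequence of positive reals satisfies `a_k ≤ C₀ ∑_{k₁+k₂=k, k₁,k₂≥1} a_{k₁} a_{k₂}`
for all `k ≥ 2`, then `a_k ≤ ((2/3)π²C₀)^{k−1} a₁^k` for all `k ≥ 1`. -/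
theorem iterate_sequence_bound (a : ℕ → ℝ) (C₀ : ℝ) (hC₀ : 0 < C₀)
    (hpos : ∀ k : ℕ, 1 ≤ k → 0 < a k)
    (hrec : ∀ k : ℕ, 2 ≤ k →
      a k ≤ C₀ * ∑ p ∈ (Finset.HasAntidiagonal.antidiagonal k).filter (fun p => 1 ≤ p.1 ∧ 1 ≤ p.2),
        a p.1 * a p.2) :
    ∀ k : ℕ, 1 ≤ k → a k ≤ (2 / 3 * Real.pi ^ 2 * C₀) ^ (k - 1) * (a 1) ^ k := by
  have ha1 : 0 < a 1 := hpos 1 le_rfl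
  set B : ℝ := 2 / 3 * Real.pi ^ 2 * C₀ with hBdef
  have hB : 0 < B := by
    have := Real.pi_pos
    positivity
  have key : ∀ k : ℕ, 1 ≤ k → a k ≤ B ^ (k - 1) * (a 1) ^ k / (k : ℝ) ^ 2 := by
    intro k
    induction k using Nat.strong_induction_on with
    | _ k ih =>
      intro hk
      rcases eq_or_lt_of_le hk with h1 | h2
      · rw [← h1]; simp
      · have hk2 : 2 ≤ k := h2
        have hstep : a k ≤ C₀ * ∑ p ∈ (Finset.HasAntidiagonal.antidiagonal k).filter
            (fun p => 1 ≤ p.1 ∧ 1 ≤ p.2), a p.1 * a p.2 := hrec k hk2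
        have hsum : ∑ p ∈ (Finset.HasAntidiagonal.antidiagonal k).filter (fun p => 1 ≤ p.1 ∧ 1 ≤ p.2),
            a p.1 * a p.2
            ≤ ∑ p ∈ (Finset.HasAntidiagonal.antidiagonal k).filter (fun p => 1 ≤ p.1 ∧ 1 ≤ p.2),
              B ^ (k - 2) * (a 1) ^ k * (1 / ((p.1 : ℝ) ^ 2 * (p.2 : ℝ) ^ 2)) := by
          apply Finset.sum_le_sum
          intro p hp
          simp only [Finset.mem_filter, Finset.HasAntidiagonal.mem_antidiagonal] at hp
          obtain ⟨hpk, hp1, hp2⟩ := hp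
          have hlt1 : p.1 < k := by omega
          have hlt2 : p.2 < k := by omega
          have b1 := ih p.1 hlt1 hp1
          have b2 := ih p.2 hlt2 hp2
          have hpos1 := hpos p.1 hp1
          have hpos2 := hpos p.2 hp2
          have hmul : a p.1 * a p.2 ≤ (B ^ (p.1 - 1) * (a 1) ^ p.1 / (p.1 : ℝ) ^ 2) *
              (B ^ (p.2 - 1) * (a 1) ^ p.2 / (p.2 : ℝ) ^ 2) := by
            apply mul_le_mul b1 b2 hpos2.le
            positivity
          refine hmul.trans_eq ?_
          have hq1 : (0 : ℝ) < (p.1 : ℝ) := by exact_mod_cast hp1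
          have hq2 : (0 : ℝ) < (p.2 : ℝ) := by exact_mod_cast hp2
          have hBpow : B ^ (p.1 - 1) * B ^ (p.2 - 1) = B ^ (k - 2) := by
            rw [← pow_add]; congr 1; omega
          have hApow : (a 1) ^ p.1 * (a 1) ^ p.2 = (a 1) ^ k := by
            rw [← pow_add, hpk]
          rw [div_mul_div_comm,
            show B ^ (p.1 - 1) * (a 1) ^ p.1 * (B ^ (p.2 - 1) * (a 1) ^ p.2)
              = (B ^ (p.1 - 1) * B ^ (p.2 - 1)) * ((a 1) ^ p.1 * (a 1) ^ p.2) by ring,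
            hBpow, hApow]
          ring
        rw [← Finset.mul_sum] at hsum
        have hs2 := sum_inv_sq_antidiag k hk2
        have hfac : (0 : ℝ) ≤ B ^ (k - 2) * (a 1) ^ k := by positivity
        calc a k ≤ C₀ * (B ^ (k - 2) * (a 1) ^ k *
              ∑ p ∈ (Finset.HasAntidiagonal.antidiagonal k).filter (fun p => 1 ≤ p.1 ∧ 1 ≤ p.2),
                1 / ((p.1 : ℝ) ^ 2 * (p.2 : ℝ) ^ 2)) :=
            hstep.trans (by apply mul_le_mul_of_nonneg_left hsum hC₀.le)
          _ ≤ C₀ * (B ^ (k - 2) * (a 1) ^ k * (2 / 3 * Real.pi ^ 2 / (k : ℝ) ^ 2)) := by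
            apply mul_le_mul_of_nonneg_left _ hC₀.le
            exact mul_le_mul_of_nonneg_left hs2 hfac
          _ = B ^ (k - 2) * B * (a 1) ^ k / (k : ℝ) ^ 2 := by
            rw [hBdef]; ring
          _ = B ^ (k - 1) * (a 1) ^ k / (k : ℝ) ^ 2 := by
            have hkk : k - 2 + 1 = k - 1 := by omega
            rw [← pow_succ, hkk]
  intro k hk
  have h := key k hk
  refine h.trans ?_
  apply div_le_self (by positivity)
  have : (1 : ℝ) ≤ (k : ℝ) := by exact_mod_cast hk
  nlinarith
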